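/- Let G be a tree and let T ⊆ V(G). If Z ⊆ V(G) is a minimum vertex multiway cut of T of size k (i.e., Z has minimum size among sets whose removal leaves every connected component of G − Z with at most one vertex of T \ Z), then there exists a collection of k pairwise vertex-disjoint T-paths in G. -/

import Mathlib

open SimpleGraph Set
set_option linter.unusedSectionVars false

namespace MWC

variable {V : Type} [DecidableEq V] {G : SimpleGraph V}

noncomputable def pth (hG : G.IsTree) (a b : V) : G.Walk a b :=
  (hG.existsUnique_path a b).choose

lemma pth_isPath (hG : G.IsTree) (a b : V) : (pth hG a b).IsPath :=
  (hG.existsUnique_path a b).choose_spec.1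

lemma pth_unique (hG : G.IsTree) {a b : V} (W : G.Walk a b) (h : W.IsPath) :
    W = pth hG a b :=
  (hG.existsUnique_path a b).choose_spec.2 W h

lemma pth_support_subset (hG : G.IsTree) {a b : V} (W : G.Walk a b) :
    (pth hG a b).support ⊆ W.support := by
  have h1 : (W.toPath : G.Walk a b) = pth hG a b := pth_unique hG _ W.toPath.2
  rw [← h1]; exact W.support_toPath_subset

/-- `x` is an ancestor of `y` in the tree rooted at `r`. -/
def anc (hG : G.IsTree) (r x y : V) : Prop := x ∈ (pth hG r y).support

lemma anc_refl (hG : G.IsTree) (r x : V) : anc hG r x x :=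
  Walk.end_mem_support _

lemma anc_root (hG : G.IsTree) (r x : V) : anc hG r r x :=
  Walk.start_mem_support _

lemma pth_prefix (hG : G.IsTree) {r x y : V} (h : anc hG r x y) :
    (pth hG r x).support ⊆ (pth hG r y).support := by
  have h1 : (pth hG r y).takeUntil x h = pth hG r x :=
    pth_unique hG _ ((pth_isPath hG r y).takeUntil h)
  rw [← h1]; exact Walk.support_takeUntil_subset _ h

lemma anc_trans (hG : G.IsTree) {r x y z : V} (h1 : anc hG r x y) (h2 : anc hG r y z) :
    anc hG r x z :=
  pth_prefix hG h2 h1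

lemma pth_suffix (hG : G.IsTree) {r v a : V} (h : anc hG r v a) :
    (pth hG v a).support ⊆ (pth hG r a).support := by
  have h1 : (pth hG r a).dropUntil v h = pth hG v a :=
    pth_unique hG _ ((pth_isPath hG r a).dropUntil h)
  rw [← h1]; exact Walk.support_dropUntil_subset _ h

noncomputable def depth (hG : G.IsTree) (r x : V) : ℕ := (pth hG r x).length

lemma depth_lt (hG : G.IsTree) {r x y : V} (h : anc hG r x y) (hne : x ≠ y) :
    depth hG r x < depth hG r y := by
  have hsp := Walk.take_spec (pth hG r y) h
  have h1 : (pth hG r y).takeUntil x h = pth hG r x :=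
    pth_unique hG _ ((pth_isPath hG r y).takeUntil h)
  have h2 := congrArg Walk.length hsp
  rw [Walk.length_append, h1] at h2
  have h3 : ((pth hG r y).dropUntil x h).length ≠ 0 :=
    fun h0 => hne (Walk.eq_of_length_eq_zero h0)
  unfold depth
  omega

lemma anc_antisymm (hG : G.IsTree) {r x y : V} (h1 : anc hG r x y) (h2 : anc hG r y x) :
    x = y := by
  by_contra hne
  exact absurd (depth_lt hG h2 (Ne.symm hne)) (not_lt.2 (le_of_lt (depth_lt hG h1 hne)))

lemma adj_support (hG : G.IsTree) (r : V) {a c : V} (h : G.Adj a c) :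
    (pth hG r a).support = (pth hG r c).support ++ [a] ∨
    (pth hG r c).support = (pth hG r a).support ++ [c] := by
  by_cases hc : c ∈ (pth hG r a).support
  · left
    have e1 : (pth hG r a).dropUntil c hc = pth hG c a :=
      pth_unique hG _ ((pth_isPath hG r a).dropUntil hc)
    have e2 : (Walk.cons h.symm Walk.nil : G.Walk c a) = pth hG c a :=
      pth_unique hG _ (by simp [Walk.isPath_def, h.ne'])
    have h1 : (pth hG r a).takeUntil c hc = pth hG r c :=
      pth_unique hG _ ((pth_isPath hG r a).takeUntil hc)
    have hsp := Walk.take_spec (pth hG r a) hc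
    rw [← hsp, Walk.support_append, h1, e1, ← e2]
    simp
  · right
    have hP : ((pth hG r a).concat h).IsPath := by
      rw [Walk.isPath_def, Walk.support_concat]
      exact List.Nodup.append (pth_isPath hG r a).support_nodup (List.nodup_singleton c)
        (by intro x hx hx'; rw [List.mem_singleton] at hx'; subst hx'; exact hc hx)
    have e1 : (pth hG r a).concat h = pth hG r c := pth_unique hG _ hP
    rw [← e1, Walk.support_concat]

lemma cross (hG : G.IsTree) (r : V) {a c w : V} (h : G.Adj a c)
    (hwa : anc hG r w a) (hwc : ¬ anc hG r w c) : w = a := by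
  rcases adj_support hG r h with h1 | h1
  · unfold anc at hwa hwc
    rw [h1, List.mem_append, List.mem_singleton] at hwa
    tauto
  · exact absurd (show anc hG r w c by unfold anc; rw [h1]; exact List.mem_append_left _ hwa) hwc

lemma mem_walk_of_anc (hG : G.IsTree) (r : V) {v : V} :
    ∀ {a b : V} (W : G.Walk a b), anc hG r v a → ¬ anc hG r v b → v ∈ W.support := by
  intro a b W
  induction W with
  | nil => intro h1 h2; exact absurd h1 h2
  | @cons a c b h W ih =>
    intro h1 h2
    by_cases hc : anc hG r v c
    · rw [Walk.support_cons]; exact List.mem_cons_of_mem _ (ih hc h2)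
    · rw [cross hG r h h1 hc]; exact Walk.start_mem_support _

lemma exists_bad_neighbor (hG : G.IsTree) (r : V) {s : V} :
    ∀ {a b : V} (W : G.Walk a b), anc hG r s a → ¬ anc hG r s b →
      ∃ y ∈ W.support, G.Adj s y ∧ ¬ anc hG r s y := by
  intro a b W
  induction W with
  | nil => intro h1 h2; exact absurd h1 h2
  | @cons a c b h W ih =>
    intro h1 h2
    by_cases hc : anc hG r s c
    · obtain ⟨y, hy, hy2⟩ := ih hc h2
      exact ⟨y, by rw [Walk.support_cons]; exact List.mem_cons_of_mem _ hy, hy2⟩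
    · have : s = a := cross hG r h h1 hc
      subst this
      exact ⟨c, by rw [Walk.support_cons]; exact List.mem_cons_of_mem _ (Walk.start_mem_support _), h, hc⟩

lemma parent_unique (hG : G.IsTree) (r : V) {s t y : V} (h1 : G.Adj s t) (h2 : G.Adj s y)
    (h3 : ¬ anc hG r s t) (h4 : ¬ anc hG r s y) : t = y := by
  have H1 : (pth hG r s).support = (pth hG r t).support ++ [s] := by
    rcases adj_support hG r h1.symm with h | h
    · exact absurd (show anc hG r s t by unfold anc; rw [h]; exact List.mem_append_left _ (anc_refl hG r s)) h3
    · exact h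
  have H2 : (pth hG r s).support = (pth hG r y).support ++ [s] := by
    rcases adj_support hG r h2.symm with h | h
    · exact absurd (show anc hG r s y by unfold anc; rw [h]; exact List.mem_append_left _ (anc_refl hG r s)) h4
    · exact h
  have H3 : (pth hG r t).support = (pth hG r y).support := by
    have := H1.symm.trans H2
    exact List.append_cancel_right this
  have ht : anc hG r t y := by unfold anc; rw [← H3]; exact anc_refl hG r t
  have hy : anc hG r y t := by unfold anc; rw [H3]; exact anc_refl hG r y
  exact anc_antisymm hG ht hy

/-- every vertex of the unique path between two descendants of `v` is a descendant of `v`. -/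
lemma pth_mem_anc (hG : G.IsTree) (r : V) {v c d : V} (hc : anc hG r v c) (hd : anc hG r v d) :
    ∀ x ∈ (pth hG c d).support, anc hG r v x := by
  intro x hx
  by_contra hvx
  have hv1 : v ∈ ((pth hG c d).takeUntil x hx).support :=
    mem_walk_of_anc hG r _ hc hvx
  have hv2 : v ∈ ((pth hG c d).dropUntil x hx).support := by
    have := mem_walk_of_anc hG r ((pth hG c d).dropUntil x hx).reverse hd hvx
    rwa [Walk.support_reverse, List.mem_reverse] at this
  have hnd : (pth hG c d).support.Nodup := (pth_isPath hG c d).support_nodup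
  rw [← Walk.take_spec (pth hG c d) hx, Walk.support_append] at hnd
  have hv2' : v = x ∨ v ∈ ((pth hG c d).dropUntil x hx).support.tail := by
    have := Walk.support_eq_cons ((pth hG c d).dropUntil x hx)
    rw [this] at hv2
    exact List.mem_cons.mp hv2
  rcases hv2' with rfl | hv2'
  · exact hvx (anc_refl hG r v)
  · exact (List.nodup_append'.mp hnd).2.2 hv1 hv2'

lemma path_support_anc (hG : G.IsTree) (r : V) :
    ∀ {c d : V} (q : G.Walk c d), q.IsPath → ∀ x ∈ q.support, anc hG r x c ∨ anc hG r x d := by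
  intro c d q
  induction q with
  | nil =>
    intro _ x hx
    rw [Walk.support_nil, List.mem_singleton] at hx
    subst hx
    exact Or.inl (anc_refl hG r _)
  | @cons c s d h q ih =>
    intro hq x hx
    have hq' : q.IsPath := hq.of_cons
    have hcnot : c ∉ q.support := ((Walk.cons_isPath_iff h q).mp hq).2
    rw [Walk.support_cons, List.mem_cons] at hx
    rcases hx with rfl | hx
    · exact Or.inl (anc_refl hG r _)
    · rcases ih hq' x hx with hxs | hxd
      · rcases adj_support hG r h with h1 | h1
        · exact Or.inl (show anc hG r x c by
            unfold anc; rw [h1]; exact List.mem_append_left _ hxs)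
        · unfold anc at hxs
          rw [h1, List.mem_append, List.mem_singleton] at hxs
          rcases hxs with hxc | hxs2
          · exact Or.inl hxc
          · subst hxs2
            right
            by_contra hsd
            have hsnotc : ¬ anc hG r x c := by
              intro hxc
              have hnd := (pth_isPath hG r x).support_nodup
              rw [h1] at hnd
              exact (List.nodup_append'.mp hnd).2.2 hxc (List.mem_singleton_self x)
            obtain ⟨y, hy, hadj, hys⟩ :=
              exists_bad_neighbor hG r q (anc_refl hG r x) hsd
            have hcy := parent_unique hG r h.symm hadj hsnotc hys
            exact hcnot (hcy ▸ hy)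
      · exact Or.inr hxd

lemma key (hG : G.IsTree) [Fintype V] (r : V) (T : Set V) :
    ∀ (n : ℕ) (A : Set V),
      (∀ x ∈ A, ∀ y, anc hG r y x → y ∈ A) →
      (T ∩ A).ncard ≤ n →
      ∃ (m : ℕ) (P : Fin m → Σ (a : V) (b : V), G.Walk a b) (z : Fin m → V),
        (∀ i, (P i).2.2.IsPath ∧ (P i).1 ∈ T ∧ (P i).2.1 ∈ T ∧ (P i).1 ≠ (P i).2.1 ∧
          ∀ x ∈ (P i).2.2.support, x ∈ A) ∧
        (∀ i j, i ≠ j → ((P i).2.2.support).Disjoint ((P j).2.2.support)) ∧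
        Function.Injective z ∧ (∀ i, z i ∈ A) ∧
        (∀ a b, a ∈ T → a ∈ A → b ∈ T → b ∈ A →
          (∀ i, z i ≠ a) → (∀ i, z i ≠ b) →
          ∀ W : G.Walk a b, (∀ x ∈ W.support, x ∈ A ∧ ∀ i, z i ≠ x) → a = b) := by
  have trivialcase : ∀ (A : Set V), (T ∩ A).ncard ≤ 1 →
      ∃ (m : ℕ) (P : Fin m → Σ (a : V) (b : V), G.Walk a b) (z : Fin m → V),
        (∀ i, (P i).2.2.IsPath ∧ (P i).1 ∈ T ∧ (P i).2.1 ∈ T ∧ (P i).1 ≠ (P i).2.1 ∧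
          ∀ x ∈ (P i).2.2.support, x ∈ A) ∧
        (∀ i j, i ≠ j → ((P i).2.2.support).Disjoint ((P j).2.2.support)) ∧
        Function.Injective z ∧ (∀ i, z i ∈ A) ∧
        (∀ a b, a ∈ T → a ∈ A → b ∈ T → b ∈ A →
          (∀ i, z i ≠ a) → (∀ i, z i ≠ b) →
          ∀ W : G.Walk a b, (∀ x ∈ W.support, x ∈ A ∧ ∀ i, z i ≠ x) → a = b) := by
    intro A h1
    refine ⟨0, fun i => i.elim0, fun i => i.elim0, fun i => i.elim0, fun i => i.elim0,
      fun i => i.elim0, fun i => i.elim0, ?_⟩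
    intro a b ha haA hb hbA _ _ _ _
    exact (Set.ncard_le_one (Set.toFinite _)).mp h1 a ⟨ha, haA⟩ b ⟨hb, hbA⟩
  intro n
  induction n with
  | zero => intro A _ hcard; exact trivialcase A (le_trans hcard (by omega))
  | succ n ih =>
    intro A hA hcard
    by_cases h1 : (T ∩ A).ncard ≤ 1
    · exact trivialcase A h1
    push_neg at h1
    -- choose deepest vertex v whose descendant set contains ≥ 2 terminals of T ∩ A
    set S : Set V := {w | 1 < (T ∩ A ∩ {x | anc hG r w x}).ncard} with hS
    have hrS : r ∈ S := by
      have : T ∩ A ∩ {x | anc hG r r x} = T ∩ A := by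
        ext x; simp only [Set.mem_inter_iff, Set.mem_setOf_eq, and_iff_left_iff_imp]
        intro _; exact anc_root hG r x
      simpa [hS, this] using h1
    obtain ⟨v, hvmem, hvmax⟩ := Finset.exists_max_image (S.toFinite.toFinset) (depth hG r)
      ⟨r, (Set.Finite.mem_toFinset _).mpr hrS⟩
    have hvS : v ∈ S := (Set.Finite.mem_toFinset _).mp hvmem
    obtain ⟨t, ht, t', ht', htt'⟩ := (Set.one_lt_ncard (Set.toFinite _)).mp hvS
    have hvt : anc hG r v t := ht.2
    have hvt' : anc hG r v t' := ht'.2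
    have hvA : v ∈ A := hA t ht.1.2 v hvt
    -- recurse on A' = A minus descendants of v
    set A' : Set V := A \ {x | anc hG r v x} with hA'def
    have hA' : ∀ x ∈ A', ∀ y, anc hG r y x → y ∈ A' := by
      intro x hx y hy
      refine ⟨hA x hx.1 y hy, ?_⟩
      intro hvy
      exact hx.2 (anc_trans hG hvy hy)
    have hsubA' : T ∩ A' ⊆ (T ∩ A) \ {t} := by
      intro x hx
      refine ⟨⟨hx.1, hx.2.1⟩, ?_⟩
      intro hxt
      rw [Set.mem_singleton_iff] at hxt
      subst hxt
      exact hx.2.2 hvt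
    have hcard' : (T ∩ A').ncard ≤ n := by
      have e1 : ((T ∩ A) \ {t}).ncard = (T ∩ A).ncard - 1 :=
        Set.ncard_diff_singleton_of_mem ht.1
      have e2 := Set.ncard_le_ncard hsubA' (Set.toFinite _)
      omega
    obtain ⟨m, P', z', hP', hdisj', hinj', hzA', hsep'⟩ := ih A' hA' hcard'
    -- the new path
    have hnpA : ∀ x ∈ (pth hG t t').support, x ∈ A := by
      intro x hx
      rcases path_support_anc hG r _ (pth_isPath hG t t') x hx with h | h
      · exact hA t ht.1.2 x h
      · exact hA t' ht'.1.2 x h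
    have hnpD : ∀ x ∈ (pth hG t t').support, anc hG r v x :=
      pth_mem_anc hG r hvt hvt'
    refine ⟨m + 1, Fin.cons ⟨t, t', pth hG t t'⟩ P', Fin.cons v z', ?_, ?_, ?_, ?_, ?_⟩
    · intro i
      rcases Fin.eq_zero_or_eq_succ i with rfl | ⟨j, rfl⟩
      · simp only [Fin.cons_zero]
        exact ⟨pth_isPath hG t t', ht.1.1, ht'.1.1, htt', hnpA⟩
      · simp only [Fin.cons_succ]
        obtain ⟨a1, a2, a3, a4, a5⟩ := hP' j
        exact ⟨a1, a2, a3, a4, fun x hx => (a5 x hx).1⟩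
    · have hd0 : ∀ j, ((pth hG t t').support).Disjoint ((P' j).2.2.support) := by
        intro j x hx1 hx2
        exact ((hP' j).2.2.2.2 x hx2).2 (hnpD x hx1)
      intro i j hij
      rcases Fin.eq_zero_or_eq_succ i with rfl | ⟨i', rfl⟩ <;>
        rcases Fin.eq_zero_or_eq_succ j with rfl | ⟨j', rfl⟩
      · exact absurd rfl hij
      · exact hd0 j'
      · exact (hd0 i').symm
      · refine hdisj' i' j' ?_
        intro h
        exact hij (by rw [h])
    · intro i j h
      rcases Fin.eq_zero_or_eq_succ i with rfl | ⟨i', rfl⟩ <;>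
        rcases Fin.eq_zero_or_eq_succ j with rfl | ⟨j', rfl⟩
      · rfl
      · simp only [Fin.cons_zero, Fin.cons_succ] at h
        exact absurd (anc_refl hG r v) (h ▸ (hzA' j').2)
      · simp only [Fin.cons_zero, Fin.cons_succ] at h
        exact absurd (anc_refl hG r v) (h ▸ (hzA' i').2)
      · simp only [Fin.cons_succ] at h
        rw [hinj' h]
    · intro i
      rcases Fin.eq_zero_or_eq_succ i with rfl | ⟨j, rfl⟩
      · simpa using hvA
      · simp only [Fin.cons_succ]; exact (hzA' j).1
    · -- separation
      intro a b ha haA hb hbA hza hzb W hW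
      have hWv : v ∉ W.support := by
        intro hv
        exact ((hW v hv).2 0) (by simp)
      by_cases hva : anc hG r v a
      · have hvb : anc hG r v b := by
          by_contra hvb
          exact hWv (mem_walk_of_anc hG r W hva hvb)
        by_contra hab
        by_cases hmeet : ∀ x, x ∈ (pth hG v a).support → x ∈ (pth hG v b).support → x = v
        · have hR : ((pth hG v a).reverse.append (pth hG v b)).IsPath := by
            rw [Walk.isPath_def, Walk.support_append, Walk.support_reverse]
            refine List.Nodup.append (List.nodup_reverse.mpr (pth_isPath hG v a).support_nodup)
              ((pth_isPath hG v b).support_nodup).tail ?_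
            intro x hx1 hx2
            rw [List.mem_reverse] at hx1
            have hx2' : x ∈ (pth hG v b).support := by
              rw [Walk.support_eq_cons]
              exact List.mem_cons_of_mem _ hx2
            have hxv := hmeet x hx1 hx2'
            rw [hxv] at hx2
            have hnd := (pth_isPath hG v b).support_nodup
            rw [Walk.support_eq_cons] at hnd
            exact (List.nodup_cons.mp hnd).1 hx2
          have hReq : (pth hG v a).reverse.append (pth hG v b) = pth hG a b :=
            pth_unique hG _ hR
          have hvin : v ∈ (pth hG a b).support := by
            rw [← hReq, Walk.mem_support_append_iff]
            refine Or.inl ?_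
            rw [Walk.support_reverse, List.mem_reverse]
            exact Walk.start_mem_support _
          exact hWv (pth_support_subset hG W hvin)
        · push_neg at hmeet
          obtain ⟨w, hw1, hw2, hwv⟩ := hmeet
          have hwa : anc hG r w a := pth_suffix hG hva hw1
          have hwb : anc hG r w b := pth_suffix hG hvb hw2
          have hvw : anc hG r v w := pth_mem_anc hG r (anc_refl hG r v) hva w hw1
          have hdlt : depth hG r v < depth hG r w := depth_lt hG hvw (Ne.symm hwv)
          have hwS : w ∈ S := by
            rw [hS, Set.mem_setOf_eq]
            exact (Set.one_lt_ncard (Set.toFinite _)).mpr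
              ⟨a, ⟨⟨ha, haA⟩, hwa⟩, b, ⟨⟨hb, hbA⟩, hwb⟩, hab⟩
          exact absurd (hvmax w ((Set.Finite.mem_toFinset _).mpr hwS)) (not_le.mpr hdlt)
      · have hsub : ∀ x ∈ W.support, x ∈ A' := by
          intro x hx
          refine ⟨(hW x hx).1, ?_⟩
          intro hvx
          have hvin : v ∈ ((W.takeUntil x hx).reverse).support :=
            mem_walk_of_anc hG r _ hvx hva
          rw [Walk.support_reverse, List.mem_reverse] at hvin
          exact hWv (Walk.support_takeUntil_subset _ hx hvin)
        have hvb : ¬ anc hG r v b := (hsub b W.end_mem_support).2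
        refine hsep' a b ha (hsub a W.start_mem_support) hb (hsub b W.end_mem_support)
          (fun i => by simpa using hza i.succ) (fun i => by simpa using hzb i.succ) W ?_
        intro x hx
        exact ⟨hsub x hx, fun i => by simpa using (hW x hx).2 i.succ⟩

end MWC

/-- Every connected component of `G[A]` contains at most one vertex of `T`. -/
def SeparatedIn {V : Type} (G : SimpleGraph V) (A T : Set V) : Prop :=
  ∀ (t₁ t₂ : V) (h₁ : t₁ ∈ A) (h₂ : t₂ ∈ A), t₁ ∈ T → t₂ ∈ T →
    (G.induce A).Reachable ⟨t₁, h₁⟩ ⟨t₂, h₂⟩ → t₁ = t₂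

/-- `Z` is a vertex multiway cut of the terminal set `T` in `G`: every connected
component of `G - Z` contains at most one vertex of `T \ Z`. -/
def IsMultiwayCut {V : Type} (G : SimpleGraph V) (T Z : Set V) : Prop :=
  SeparatedIn G Zᶜ (T \ Z)

theorem stmt9 (V : Type) [Fintype V] (G : SimpleGraph V)
    (hconn : G.Connected) (hacyc : G.IsAcyclic)
    (T Z : Set V) (k : ℕ)
    (hZ : IsMultiwayCut G T Z) (hcard : Z.ncard = k)
    (hmin : ∀ Z' : Set V, IsMultiwayCut G T Z' → Z.ncard ≤ Z'.ncard) :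
    ∃ (u v : Fin k → V) (p : ∀ i : Fin k, G.Walk (u i) (v i)),
      (∀ i, (p i).IsPath) ∧
      (∀ i, u i ∈ T ∧ v i ∈ T ∧ u i ≠ v i) ∧
      (∀ i j, i ≠ j → ((p i).support).Disjoint ((p j).support)) := by
  classical
  have hG : G.IsTree := ⟨hconn, hacyc⟩
  obtain ⟨r⟩ := hconn.nonempty
  obtain ⟨m, P, z, hP, hdisj, hinj, _, hsep⟩ :=
    MWC.key hG r T (T ∩ Set.univ).ncard Set.univ (fun _ _ _ _ => trivial) le_rfl
  have hcut : IsMultiwayCut G T (Set.range z) := by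
    intro t₁ t₂ h₁ h₂ ht₁ ht₂ hreach
    obtain ⟨Wi⟩ := hreach
    let W : G.Walk t₁ t₂ := Wi.map (SimpleGraph.Embedding.induce (Set.range z)ᶜ).toHom
    refine hsep t₁ t₂ ht₁.1 trivial ht₂.1 trivial ?_ ?_ W ?_
    · intro i h; exact ht₁.2 ⟨i, h⟩
    · intro i h; exact ht₂.2 ⟨i, h⟩
    · intro x hx
      refine ⟨trivial, ?_⟩
      rw [show W.support = _ from SimpleGraph.Walk.support_map _ _] at hx
      obtain ⟨y, hy, rfl⟩ := List.mem_map.mp hx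
      intro i h
      exact y.2 ⟨i, h⟩
  have hkm : k ≤ m := by
    have h1 := hmin (Set.range z) hcut
    have hz : (Set.range z).ncard = m := by
      rw [← Nat.card_coe_set_eq, Nat.card_range_of_injective hinj,
        Nat.card_eq_fintype_card, Fintype.card_fin]
    omega
  refine ⟨fun i => (P (Fin.castLE hkm i)).1, fun i => (P (Fin.castLE hkm i)).2.1,
    fun i => (P (Fin.castLE hkm i)).2.2, fun i => (hP _).1,
    fun i => ⟨(hP _).2.1, (hP _).2.2.1, (hP _).2.2.2.1⟩, ?_⟩
  intro i j hij
  exact hdisj _ _ (fun h => hij (Fin.castLE_injective hkm h))
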